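/- For every positive integer k, the k×k complex matrix u_k with entries (u_k)_{p,q} = √(2/(k+1)) · ι^p · sin(π p q/(k+1)) for p, q ∈ {1, …, k} (where ι = √(-1)) is unitary, i.e., u_k multiplied by its conjugate transpose equals the k×k identity matrix. -/

import Mathlib

open Complex Finset

noncomputable def Eu (n : ℕ) (m : ℤ) : ℂ := Complex.exp (Real.pi * Complex.I * m / n)

lemma Eu_add (n : ℕ) (a b : ℤ) : Eu n (a + b) = Eu n a * Eu n b := by
  rw [Eu, Eu, Eu, ← Complex.exp_add]; congr 1; push_cast; ring

lemma Eu_zero (n : ℕ) : Eu n 0 = 1 := by simp [Eu]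

lemma Eu_ne_zero (n : ℕ) (m : ℤ) : Eu n m ≠ 0 := Complex.exp_ne_zero _

lemma Eu_neg (n : ℕ) (m : ℤ) : Eu n (-m) = (Eu n m)⁻¹ := by
  rw [Eu, Eu, ← Complex.exp_neg]; congr 1; push_cast; ring

lemma Eu_pow_self (n : ℕ) (hn : 0 < n) (m : ℤ) : (Eu n m) ^ n = (-1 : ℂ) ^ m := by
  rw [Eu, ← Complex.exp_nat_mul]
  have hnc : (n : ℂ) ≠ 0 := by exact_mod_cast hn.ne'
  have : (n : ℂ) * (Real.pi * Complex.I * m / n) = m * (Real.pi * Complex.I) := by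
    field_simp
  rw [this, Complex.exp_int_mul]
  congr 1
  simpa [mul_comm] using Complex.exp_pi_mul_I

lemma Eu_ne_one (n : ℕ) (hn : 0 < n) (m : ℤ) (h0 : 0 < m) (h2 : m < 2 * n) : Eu n m ≠ 1 := by
  rw [Eu]
  intro h
  rw [Complex.exp_eq_one_iff] at h
  obtain ⟨j, hj⟩ := h
  have hπ : (Real.pi : ℂ) ≠ 0 := by simpa using Real.pi_ne_zero
  have hnc : (n : ℂ) ≠ 0 := by exact_mod_cast hn.ne'
  have hm : (m : ℂ) = 2 * n * j := by
    field_simp at hj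
    have h2' : (m : ℂ) * (Real.pi * Complex.I) = (2 * n * j) * (Real.pi * Complex.I) := by
      linear_combination (Real.pi * Complex.I) * hj
    exact mul_right_cancel₀ (mul_ne_zero hπ Complex.I_ne_zero) h2'
  have hm' : m = 2 * n * j := by exact_mod_cast hm
  rcases le_or_gt j 0 with hjl | hjl
  · nlinarith [(by exact_mod_cast hn : (0:ℤ) < n)]
  · nlinarith [(by exact_mod_cast hn : (0:ℤ) < n)]

lemma negone_zpow_sq (m : ℤ) : ((-1:ℂ)^m) * ((-1:ℂ)^m) = 1 := by
  rcases Int.even_or_odd m with h | h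
  · rw [h.neg_one_zpow]; norm_num
  · rw [h.neg_one_zpow]; norm_num

lemma negone_zpow_neg (m : ℤ) : ((-1:ℂ)^(-m)) = (-1:ℂ)^m := by
  rw [zpow_neg]
  exact (eq_inv_of_mul_eq_one_left (negone_zpow_sq m)).symm

noncomputable def Sg (n : ℕ) (m : ℤ) : ℂ := ∑ r ∈ range n, (Eu n m)^r

lemma Sg_zero (n : ℕ) : Sg n 0 = n := by simp [Sg, Eu_zero]

lemma Sg_pair (n : ℕ) (hn : 0 < n) (m : ℤ) (h : Eu n m ≠ 1) :
    Sg n m + Sg n (-m) = 1 - (-1:ℂ)^m := by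
  have hz0 : Eu n m ≠ 0 := Eu_ne_zero n m
  have hz' : (Eu n m)⁻¹ ≠ 1 := by
    intro hh; exact h (inv_eq_one.mp hh)
  rw [Sg, Sg, Eu_neg, geom_sum_eq h, geom_sum_eq hz', inv_pow, Eu_pow_self n hn m]
  set z := Eu n m with hzdef
  set w := (-1:ℂ)^m with hwdef
  have hw : w * w = 1 := negone_zpow_sq m
  have hw' : w⁻¹ = w := (eq_inv_of_mul_eq_one_left hw).symm
  rw [hw']
  have h1 : z - 1 ≠ 0 := sub_ne_zero.mpr h
  have h2 : z⁻¹ - 1 ≠ 0 := sub_ne_zero.mpr hz'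
  have h3 : (1 : ℂ) - z ≠ 0 := fun hh => h (sub_eq_zero.mp hh).symm
  field_simp
  ring

lemma Sg_pair' (n : ℕ) (hn : 0 < n) (m : ℤ) (hm0 : m ≠ 0) (hm : |m| < 2*n) :
    Sg n m + Sg n (-m) = 1 - (-1:ℂ)^m := by
  rcases lt_or_gt_of_ne hm0 with h | h
  · have h1 : Eu n (-m) ≠ 1 := by
      apply Eu_ne_one n hn _ (by omega)
      rw [abs_of_neg h] at hm; omega
    have := Sg_pair n hn (-m) h1
    rw [neg_neg, negone_zpow_neg] at this
    linear_combination this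
  · have h1 : Eu n m ≠ 1 := by
      apply Eu_ne_one n hn _ h
      rw [abs_of_pos h] at hm; omega
    exact Sg_pair n hn m h1

lemma exp_eq_Eu_pow (n : ℕ) (m : ℤ) (r : ℕ) :
    Complex.exp ((Real.pi * m * r / n) * Complex.I) = (Eu n m)^r := by
  rw [Eu, ← Complex.exp_nat_mul]; congr 1; ring

lemma sin_mul_sin (n : ℕ) (a b : ℕ) (r : ℕ) :
    Complex.sin (Real.pi * a * r / n) * Complex.sin (Real.pi * b * r / n)
      = -(1/4) * ((Eu n ((a:ℤ)+b))^r - (Eu n ((a:ℤ)-b))^r - (Eu n ((b:ℤ)-a))^r + (Eu n (-((a:ℤ)+b)))^r) := by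
  have sin_def : ∀ z : ℂ, Complex.sin z = (Complex.exp (-z * Complex.I) - Complex.exp (z * Complex.I)) * Complex.I / 2 := fun z => rfl
  rw [sin_def, sin_def]
  have ea : Complex.exp ((Real.pi * (a:ℂ) * r / n) * Complex.I) = (Eu n a)^r := by
    have := exp_eq_Eu_pow n a r; push_cast at this; exact this
  have ea' : Complex.exp (-(Real.pi * (a:ℂ) * r / n) * Complex.I) = (Eu n (-(a:ℤ)))^r := by
    have := exp_eq_Eu_pow n (-(a:ℤ)) r; push_cast at this ⊢; rw [← this]; congr 1; ring
  have eb : Complex.exp ((Real.pi * (b:ℂ) * r / n) * Complex.I) = (Eu n b)^r := by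
    have := exp_eq_Eu_pow n b r; push_cast at this; exact this
  have eb' : Complex.exp (-(Real.pi * (b:ℂ) * r / n) * Complex.I) = (Eu n (-(b:ℤ)))^r := by
    have := exp_eq_Eu_pow n (-(b:ℤ)) r; push_cast at this ⊢; rw [← this]; congr 1; ring
  rw [ea, ea', eb, eb']
  have h1 : (Eu n a)^r * (Eu n b)^r = (Eu n ((a:ℤ)+b))^r := by
    rw [← mul_pow, ← Eu_add]
  have h2 : (Eu n a)^r * (Eu n (-(b:ℤ)))^r = (Eu n ((a:ℤ)-b))^r := by
    rw [← mul_pow, ← Eu_add, sub_eq_add_neg]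
  have h3 : (Eu n (-(a:ℤ)))^r * (Eu n b)^r = (Eu n ((b:ℤ)-a))^r := by
    rw [← mul_pow, ← Eu_add]; congr 2; ring
  have h4 : (Eu n (-(a:ℤ)))^r * (Eu n (-(b:ℤ)))^r = (Eu n (-((a:ℤ)+b)))^r := by
    rw [← mul_pow, ← Eu_add]; congr 2; ring
  linear_combination (-(1/4) : ℂ) * h4 + (1/4) * h3 + (1/4) * h2 - (1/4) * h1 +
    (((Eu n (-(a:ℤ)))^r - (Eu n a)^r) * ((Eu n (-(b:ℤ)))^r - (Eu n b)^r)/4) * Complex.I_sq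

lemma sin_orth (k : ℕ) (P Q : ℕ) (hP1 : 1 ≤ P) (hP : P ≤ k) (hQ1 : 1 ≤ Q) (hQ : Q ≤ k) :
    ∑ r ∈ range (k+1), Complex.sin (Real.pi * P * r / (k+1)) * Complex.sin (Real.pi * Q * r / (k+1))
      = if P = Q then ((k:ℂ)+1)/2 else 0 := by
  have hn : 0 < k + 1 := Nat.succ_pos k
  have hcast : ((k+1 : ℕ) : ℂ) = (k:ℂ)+1 := by push_cast; ring
  have hsum : ∑ r ∈ range (k+1), Complex.sin (Real.pi * P * r / (k+1)) * Complex.sin (Real.pi * Q * r / (k+1))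
      = -(1/4) * (Sg (k+1) ((P:ℤ)+Q) - Sg (k+1) ((P:ℤ)-Q) - Sg (k+1) ((Q:ℤ)-P) + Sg (k+1) (-((P:ℤ)+Q))) := by
    rw [Finset.sum_congr rfl (fun r _ => by
      have := sin_mul_sin (k+1) P Q r
      push_cast at this ⊢
      exact this)]
    rw [Sg, Sg, Sg, Sg]
    simp only [← Finset.sum_sub_distrib, ← Finset.sum_add_distrib, Finset.mul_sum]
  rw [hsum]
  have hPQpair : Sg (k+1) ((P:ℤ)+Q) + Sg (k+1) (-((P:ℤ)+Q)) = 1 - (-1:ℂ)^((P:ℤ)+Q) := by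
    apply Sg_pair' (k+1) hn _ (by omega)
    rw [abs_lt]; constructor <;> omega
  by_cases h : P = Q
  · subst h
    rw [if_pos rfl]
    have e0 : (P:ℤ) - P = 0 := by ring
    rw [e0, Sg_zero]
    have hev : (-1:ℂ)^((P:ℤ)+P) = 1 := Even.neg_one_zpow ⟨P, rfl⟩
    rw [hev] at hPQpair
    rw [hcast]
    linear_combination (-(1/4):ℂ) * hPQpair
  · rw [if_neg h]
    have hpq' : Sg (k+1) ((P:ℤ)-Q) + Sg (k+1) (-((P:ℤ)-Q)) = 1 - (-1:ℂ)^((P:ℤ)-Q) := by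
      apply Sg_pair' (k+1) hn _ (by omega)
      rw [abs_lt]; constructor <;> omega
    have e : (Q:ℤ)-P = -((P:ℤ)-Q) := by ring
    rw [e]
    have hw : (-1:ℂ)^((P:ℤ)+Q) = (-1:ℂ)^((P:ℤ)-Q) := by
      have h2 : (P:ℤ)+Q = ((P:ℤ)-Q) + 2*Q := by ring
      rw [h2, zpow_add₀ (by norm_num : (-1:ℂ) ≠ 0)]
      rw [show ((-1:ℂ))^(2*(Q:ℤ)) = 1 from Even.neg_one_zpow ⟨Q, by ring⟩]
      ring
    linear_combination (-(1/4):ℂ) * hPQpair + (1/4:ℂ) * hpq' + (1/4:ℂ) * hw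



/-- The `k × k` matrix `u_k` with `(p,q)` entry `√(2/(k+1)) ιᵖ sin(π p q/(k+1))`,
for `p, q ∈ {1, …, k}` (here indexed by `Fin k`, so `p` corresponds to `(p : ℕ) + 1`). -/
noncomputable def umat (k : ℕ) : Matrix (Fin k) (Fin k) ℂ :=
  Matrix.of fun p q =>
    (Real.sqrt (2 / ((k : ℝ) + 1)) : ℂ) * Complex.I ^ ((p : ℕ) + 1) *
      ((Real.sin (Real.pi * ((p : ℕ) + 1) * ((q : ℕ) + 1) / ((k : ℝ) + 1)) : ℝ) : ℂ)


/-- For every positive integer `k`, the matrix `u_k` is unitary: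
`u_k` times its conjugate transpose is the identity. -/
theorem umat_mul_conjTranspose (k : ℕ) (hk : 0 < k) :
    umat k * (umat k).conjTranspose = 1 := by
  have hk1 : ((k:ℝ)+1) > 0 := by positivity
  ext p q
  rw [Matrix.mul_apply]
  simp only [umat, Matrix.conjTranspose_apply, Matrix.of_apply, RCLike.star_def, map_mul,
    Complex.conj_ofReal, map_pow, Complex.conj_I]
  set g : ℕ → ℂ := fun j =>
    Complex.sin (Real.pi * (((p:ℕ)+1 : ℕ)) * j / ((k:ℕ)+1)) *
    Complex.sin (Real.pi * (((q:ℕ)+1 : ℕ)) * j / ((k:ℕ)+1)) with hg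
  have hterm : ∀ r : Fin k,
      (Real.sqrt (2 / ((k : ℝ) + 1)) : ℂ) * Complex.I ^ ((p : ℕ) + 1) *
        ((Real.sin (Real.pi * ((p : ℕ) + 1) * ((r : ℕ) + 1) / ((k : ℝ) + 1)) : ℝ) : ℂ) *
      ((Real.sqrt (2 / ((k : ℝ) + 1)) : ℂ) * (-Complex.I) ^ ((q : ℕ) + 1) *
        ((Real.sin (Real.pi * ((q : ℕ) + 1) * ((r : ℕ) + 1) / ((k : ℝ) + 1)) : ℝ) : ℂ))
      = ((2 / ((k:ℝ)+1) : ℝ) : ℂ) * (Complex.I ^ ((p : ℕ) + 1) * (-Complex.I) ^ ((q : ℕ) + 1)) *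
        g ((r:ℕ)+1) := by
    intro r
    have hs : (Real.sqrt (2 / ((k : ℝ) + 1)) : ℂ) * (Real.sqrt (2 / ((k : ℝ) + 1)) : ℂ)
        = ((2 / ((k:ℝ)+1) : ℝ) : ℂ) := by
      rw [← Complex.ofReal_mul, Real.mul_self_sqrt (by positivity)]
    have hg1 : ((Real.sin (Real.pi * ((p : ℕ) + 1) * ((r : ℕ) + 1) / ((k : ℝ) + 1)) : ℝ) : ℂ) *
        ((Real.sin (Real.pi * ((q : ℕ) + 1) * ((r : ℕ) + 1) / ((k : ℝ) + 1)) : ℝ) : ℂ)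
        = g ((r:ℕ)+1) := by
      rw [hg, Complex.ofReal_sin, Complex.ofReal_sin]
      push_cast
      ring_nf
    linear_combination (Complex.I ^ ((p : ℕ) + 1) * (-Complex.I) ^ ((q : ℕ) + 1) *
        (Real.sqrt (2 / ((k : ℝ) + 1)) : ℂ) * (Real.sqrt (2 / ((k : ℝ) + 1)) : ℂ)) * hg1 +
      (Complex.I ^ ((p : ℕ) + 1) * (-Complex.I) ^ ((q : ℕ) + 1) * g ((r:ℕ)+1)) * hs
  rw [Finset.sum_congr rfl (fun r _ => hterm r), ← Finset.mul_sum]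
  have hsum : (∑ r : Fin k, g ((r:ℕ)+1)) = if ((p:ℕ)+1) = ((q:ℕ)+1) then ((k:ℂ)+1)/2 else 0 := by
    have e1 : (∑ r : Fin k, g ((r:ℕ)+1)) = ∑ j ∈ range k, g (j+1) :=
      Fin.sum_univ_eq_sum_range (fun j => g (j+1)) k
    have e2 : ∑ j ∈ range (k+1), g j = ∑ j ∈ range k, g (j+1) + g 0 := Finset.sum_range_succ' g k
    have e3 : g 0 = 0 := by simp [hg]
    have e4 := sin_orth k ((p:ℕ)+1) ((q:ℕ)+1) (by omega) (by omega) (by omega) (by omega)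
    rw [e2, e3, add_zero] at e4
    rw [e1]
    exact e4
  rw [hsum]
  by_cases hpq : p = q
  · subst hpq
    rw [if_pos rfl, Matrix.one_apply_eq]
    have hiI : Complex.I ^ ((p : ℕ) + 1) * (-Complex.I) ^ ((p : ℕ) + 1) = 1 := by
      rw [← mul_pow]
      have h5 : Complex.I * -Complex.I = 1 := by
        rw [mul_neg, Complex.I_mul_I]; norm_num
      rw [h5, one_pow]
    rw [hiI, mul_one]
    have hc2 : ((2 / ((k:ℝ)+1) : ℝ) : ℂ) = 2 / ((k:ℂ)+1) := by push_cast; ring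
    rw [hc2]
    have hkc : ((k:ℂ)+1) ≠ 0 := by
      intro h
      have : ((k:ℝ)+1) = 0 := by exact_mod_cast congrArg Complex.re h
      linarith
    rw [div_mul_div_comm, mul_comm, div_self (by
      exact mul_ne_zero hkc (by norm_num))]
  · have hne : ((p : ℕ)+1) ≠ ((q : ℕ)+1) := by
      intro h
      exact hpq (Fin.ext (by omega))
    rw [if_neg hne, mul_zero, Matrix.one_apply_ne hpq]
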